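/- arXiv:1012.3818 — 3 statements merged into one kernel-verified Lean document; each statement's English description precedes it below -/
import Mathlib

section
/- Let f ∈ ℂ[t] be a non-constant polynomial, let A be the localization of the polynomial ring ℂ[t] away from the derivative f′, and let δ : A → A be the unique derivation extending d/dt. Then the additive map Φ on the module A((u)) of formal Laurent series in u with coefficients in A, defined by Φ(∑_k φ_k u^k) = ∑_k (δ(φ_{k−1}) − f′·φ_k) u^k (that is, Φ = u·δ − f′ with δ acting coefficientwise), is bijective. Equivalently, the formal twisted de Rham complex A((u)) → A((u)) given by u∂_t − f′ has zero cohomology in both degrees. -/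
open Polynomial

/-- Auxiliary recursively defined coefficient sequence. -/
noncomputable def auxSeq {A : Type*} [CommRing A] (δ : A → A) (v : A) (y : ℤ → A)
    (N : ℤ) : ℕ → A
  | 0 => -(v * y N)
  | (n+1) => v * (δ (auxSeq δ v y N n) - y (N + n + 1))

/-- **Example 1.3 (formal case).** For a non-constant polynomial `f ∈ ℂ[t]`, with
`A = ℂ[t, 1/f']` the localization of `ℂ[t]` away from `f'`, `δ : A → A` the unique
derivation extending `d/dt`, the operator `Φ = u·δ − f'` acting on the formal Laurent
series `A((u))` (with `δ` acting coefficientwise and `u` the shift) is bijective: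
the formal twisted de Rham complex `A((u)) → A((u))`, `u∂_t − f'`, has zero cohomology. -/
theorem stmt_0 (f : Polynomial ℂ) (hf : 0 < f.natDegree)
    (δ : Derivation ℂ (Localization.Away f.derivative) (Localization.Away f.derivative))
    (hδ : ∀ p : Polynomial ℂ,
      δ (algebraMap (Polynomial ℂ) (Localization.Away f.derivative) p) =
        algebraMap (Polynomial ℂ) (Localization.Away f.derivative) p.derivative)
    (Φ : HahnSeries ℤ (Localization.Away f.derivative) →+
         HahnSeries ℤ (Localization.Away f.derivative))
    (hΦ : ∀ (x : HahnSeries ℤ (Localization.Away f.derivative)) (k : ℤ),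
      (Φ x).coeff k =
        δ (x.coeff (k - 1)) -
          algebraMap (Polynomial ℂ) (Localization.Away f.derivative) f.derivative *
            x.coeff k) :
    Function.Bijective Φ := by
  set A := Localization.Away f.derivative
  set g : A := algebraMap (Polynomial ℂ) A f.derivative with hg
  set v : A := IsLocalization.Away.invSelf (S := A) f.derivative with hv
  have hgv : g * v = 1 := IsLocalization.Away.mul_invSelf f.derivative
  constructor
  · rw [injective_iff_map_eq_zero]
    intro x hx
    by_contra hx0
    have h1 : (Φ x).coeff x.order = 0 := by rw [hx]; rfl
    rw [hΦ] at h1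
    have h2 : x.coeff (x.order - 1) = 0 :=
      HahnSeries.coeff_eq_zero_of_lt_order (by omega)
    rw [h2, map_zero, zero_sub, neg_eq_zero] at h1
    have : x.coeff x.order = 0 := by
      have := congrArg (v * ·) h1
      simp only [mul_zero] at this
      rwa [← mul_assoc, mul_comm v g, hgv, one_mul] at this
    exact hx0 (HahnSeries.coeff_order_eq_zero.mp this)
  · intro y
    by_cases hy : y = 0
    · exact ⟨0, by rw [map_zero, hy]⟩
    set N := y.order with hN
    set c : ℕ → A := auxSeq δ v y.coeff N with hc
    set F : ℤ → A := fun k => if N ≤ k then c (k - N).toNat else 0 with hF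
    have hsupp : Function.support F ⊆ Set.Ici N := by
      intro k hk
      by_contra h
      simp only [Set.mem_Ici, not_le] at h
      apply hk
      simp [hF, not_le.mpr h]
    have hpwo : (Function.support F).IsPWO :=
      (Set.IsWF.isPWO ((bddBelow_Ici).mono hsupp |>.wellFoundedOn_lt)).mono
        (le_refl _) |>.mono (le_refl _)
    refine ⟨⟨F, hpwo⟩, ?_⟩
    ext k
    show (Φ _).coeff k = y.coeff k
    rw [hΦ]
    show δ (F (k - 1)) - g * F k = y.coeff k
    rcases lt_trichotomy k N with h | h | h
    · have hk : F k = 0 := if_neg (by omega)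
      have hk1 : F (k - 1) = 0 := if_neg (by omega)
      have hyk : y.coeff k = 0 := HahnSeries.coeff_eq_zero_of_lt_order h
      rw [hk, hk1, hyk, map_zero, mul_zero, sub_zero]
    · have hk1 : F (k - 1) = 0 := if_neg (by omega)
      have hk : F k = -(v * y.coeff k) := by
        show (if N ≤ k then c (k - N).toNat else 0) = _
        rw [if_pos (le_of_eq h.symm)]
        have : (k - N).toNat = 0 := by omega
        rw [this]
        show -(v * y.coeff N) = -(v * y.coeff k)
        rw [h]
      rw [hk, hk1, map_zero, zero_sub, mul_neg, neg_neg, ← mul_assoc, hgv, one_mul]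
    · obtain ⟨n, hn⟩ : ∃ n : ℕ, k - 1 - N = (n : ℤ) := ⟨(k - 1 - N).toNat, by omega⟩
      have hk1 : F (k - 1) = c n := by
        show (if N ≤ k - 1 then c (k - 1 - N).toNat else 0) = _
        rw [if_pos (by omega)]
        congr 1
        omega
      have hk : F k = c (n + 1) := by
        show (if N ≤ k then c (k - N).toNat else 0) = _
        rw [if_pos (by omega)]
        congr 1
        omega
      rw [hk, hk1]
      have : c (n + 1) = v * (δ (c n) - y.coeff (N + n + 1)) := rfl
      rw [this, ← mul_assoc, hgv, one_mul]
      have hkeq : N + (n : ℤ) + 1 = k := by omega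
      rw [hkeq]
      ring
end

section
/- Let f ∈ ℂ[t] be a non-constant polynomial, let A be the localization of the polynomial ring ℂ[t] away from the derivative f′, and let δ : A → A be the unique derivation extending d/dt. Then the additive map Φ on the module A[u, u⁻¹] of Laurent polynomials in u with coefficients in A, defined by Φ(∑_k φ_k u^k) = ∑_k (δ(φ_{k−1}) − f′·φ_k) u^k (that is, Φ = u·δ − f′ with δ acting coefficientwise), is injective. Equivalently, the algebraic twisted de Rham complex A[u,u⁻¹] → A[u,u⁻¹] given by u∂_t − f′ has cohomology only in degree one. -/
open Polynomial

/-- **Example 1.3 (algebraic case, injectivity).** For a non-constant polynomial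
`f ∈ ℂ[t]`, with `A = ℂ[t, 1/f']` the localization of `ℂ[t]` away from `f'` and
`δ : A → A` the unique derivation extending `d/dt`, the operator `Φ = u·δ − f'`
acting on the Laurent polynomials `A[u, u⁻¹]` (finitely supported `ℤ`-indexed
families, with `δ` acting coefficientwise and `u` the degree shift) is injective:
the algebraic twisted de Rham complex has cohomology in degree one only. -/
theorem stmt_1 (f : Polynomial ℂ) (hf : 0 < f.natDegree)
    (δ : Derivation ℂ (Localization.Away f.derivative) (Localization.Away f.derivative))
    (hδ : ∀ p : Polynomial ℂ,
      δ (algebraMap (Polynomial ℂ) (Localization.Away f.derivative) p) =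
        algebraMap (Polynomial ℂ) (Localization.Away f.derivative) p.derivative)
    (Φ : (ℤ →₀ Localization.Away f.derivative) →+ (ℤ →₀ Localization.Away f.derivative))
    (hΦ : ∀ (φ : ℤ →₀ Localization.Away f.derivative) (k : ℤ),
      Φ φ k =
        δ (φ (k - 1)) -
          algebraMap (Polynomial ℂ) (Localization.Away f.derivative) f.derivative * φ k) :
    Function.Injective Φ := by
  rw [injective_iff_map_eq_zero]
  intro φ h
  by_contra hne
  have hsupp : φ.support.Nonempty := Finsupp.support_nonempty_iff.mpr hne
  set k := φ.support.min' hsupp with hk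
  have hkmem : k ∈ φ.support := φ.support.min'_mem hsupp
  have hprev : φ (k - 1) = 0 := by
    by_contra hp
    have : k - 1 ∈ φ.support := Finsupp.mem_support_iff.mpr hp
    have := φ.support.min'_le _ this
    omega
  have h0 : Φ φ k = 0 := by rw [h]; rfl
  rw [hΦ, hprev, map_zero, zero_sub, neg_eq_zero] at h0
  have hu : IsUnit (algebraMap (Polynomial ℂ) (Localization.Away f.derivative) f.derivative) :=
    IsLocalization.Away.algebraMap_isUnit _
  have : φ k = 0 := by
    have := hu.mul_right_eq_zero.mp h0
    exact this
  exact Finsupp.mem_support_iff.mp hkmem this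
end

section
/- Let R be a commutative Noetherian ring and let M be a finitely generated R-module. Then the canonical R((u))-linear map R((u)) ⊗_R M → M((u)), sending a ⊗ m to the Laurent series a·m (i.e. determined by sending 1 ⊗ m to the series with coefficient m in degree 0 and extending R((u))-linearly), is bijective. -/
open scoped TensorProduct

private lemma isPWO_biUnion_aux {ι : Type*} (s : Finset ι) (f : ι → Set ℤ)
    (hf : ∀ i, (f i).IsPWO) : (⋃ i ∈ s, f i).IsPWO := by
  classical
  induction s using Finset.induction with
  | empty => simp [Set.isPWO_empty]
  | insert _ _ h ih =>
    rw [Finset.set_biUnion_insert]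
    exact (hf _).union ih

private lemma coeff_sum_aux {Γ : Type*} [PartialOrder Γ] {V : Type*} [AddCommMonoid V]
    {ι : Type*} (F : Finset ι) (g : ι → HahnSeries Γ V) (k : Γ) :
    (∑ i ∈ F, g i).coeff k = ∑ i ∈ F, (g i).coeff k :=
  map_sum (HahnSeries.coeff.addMonoidHom k) g F

/-- **(2.1), module-theoretic content.** For a commutative Noetherian ring `R` and a
finitely generated `R`-module `M`, the canonical map `R((u)) ⊗_R M → M((u))` (sending
`a ⊗ m` to the Laurent series with coefficients `(a_k • m)_k`) is bijective. -/
theorem stmt_4 (R : Type*) [CommRing R] [IsNoetherianRing R]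
    (M : Type*) [AddCommGroup M] [Module R M] [Module.Finite R M]
    (h : LaurentSeries R ⊗[R] M →ₗ[R] HahnSeries ℤ M)
    (hh : ∀ (a : LaurentSeries R) (m : M) (k : ℤ),
      (h (a ⊗ₜ[R] m)).coeff k = a.coeff k • m) :
    Function.Bijective h := by
  classical
  obtain ⟨n, s, hs⟩ := Module.Finite.exists_fin (R := R) (M := M)
  have hmem : ∀ m : M, m ∈ Submodule.span R (Set.range s) := fun m => hs ▸ Submodule.mem_top
  -- every element of the tensor product can be written as `∑ i, a i ⊗ s i`
  have rep : ∀ t : LaurentSeries R ⊗[R] M,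
      ∃ a : Fin n → LaurentSeries R, t = ∑ i, a i ⊗ₜ[R] s i := by
    intro t
    induction t with
    | zero => exact ⟨0, by simp⟩
    | tmul x m =>
      obtain ⟨c, hc⟩ := (Submodule.mem_span_range_iff_exists_fun R).1 (hmem m)
      refine ⟨fun i => c i • x, ?_⟩
      rw [← hc, TensorProduct.tmul_sum]
      exact Finset.sum_congr rfl fun i _ => (TensorProduct.smul_tmul _ _ _).symm
    | add t1 t2 ih1 ih2 =>
      obtain ⟨a1, h1⟩ := ih1
      obtain ⟨a2, h2⟩ := ih2
      refine ⟨a1 + a2, ?_⟩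
      simp [h1, h2, TensorProduct.add_tmul, Finset.sum_add_distrib]
  constructor
  · -- injectivity
    rw [injective_iff_map_eq_zero]
    intro t ht
    obtain ⟨a, rfl⟩ := rep t
    set π : (Fin n → R) →ₗ[R] M := Fintype.linearCombination R s with hπdef
    have hπ : ∀ c : Fin n → R, π c = ∑ i, c i • s i := fun c =>
      Fintype.linearCombination_apply R s c
    set w : ℤ → Fin n → R := fun k i => (a i).coeff k with hwdef
    have hw : ∀ k, ∑ i, w k i • s i = 0 := by
      intro k
      have := congrArg (fun x : HahnSeries ℤ M => x.coeff k) ht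
      simpa [map_sum, coeff_sum_aux, hh, hwdef] using this
    have hKfg : (LinearMap.ker π).FG := IsNoetherian.noetherian _
    obtain ⟨p, v, hv⟩ := Submodule.fg_iff_exists_fin_generating_family.1 hKfg
    have hwk : ∀ k, ∃ c : Fin p → R, (w k = 0 → c = 0) ∧ ∑ j, c j • v j = w k := by
      intro k
      by_cases hk : w k = 0
      · exact ⟨0, fun _ => rfl, by simp [hk]⟩
      · have : w k ∈ Submodule.span R (Set.range v) := by
          rw [hv, LinearMap.mem_ker, hπ]
          exact hw k
        obtain ⟨c, hc⟩ := (Submodule.mem_span_range_iff_exists_fun R).1 this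
        exact ⟨c, fun hz => absurd hz hk, hc⟩
    choose c hc1 hc2 using hwk
    -- the coefficient functions give genuine Laurent series
    have hsupp : ∀ j : Fin p, (Function.support fun k => c k j).IsPWO := by
      intro j
      refine Set.IsPWO.mono (isPWO_biUnion_aux Finset.univ (fun i => (a i).support)
        fun i => (a i).isPWO_support) ?_
      intro k hk
      have hwk0 : w k ≠ 0 := by
        intro hz
        exact hk (by simp [hc1 k hz])
      have : ∃ i, (a i).coeff k ≠ 0 := by
        by_contra hcon
        push_neg at hcon
        exact hwk0 (funext fun i => hcon i)
      obtain ⟨i, hi⟩ := this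
      exact Set.mem_biUnion (Finset.mem_univ i) hi
    set b : Fin p → LaurentSeries R := fun j => ⟨fun k => c k j, hsupp j⟩ with hbdef
    have hab : ∀ i, a i = ∑ j, v j i • b j := by
      intro i
      ext k
      rw [coeff_sum_aux]
      have := congrFun (hc2 k) i
      simp only [Finset.sum_apply, Pi.smul_apply, smul_eq_mul] at this
      calc (a i).coeff k = w k i := rfl
        _ = ∑ j, c k j * v j i := by rw [← this]
        _ = ∑ j, (v j i • b j).coeff k := by
            exact Finset.sum_congr rfl fun j _ => by
              rw [HahnSeries.coeff_smul, smul_eq_mul, mul_comm]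
    have hvker : ∀ j, π (v j) = 0 := by
      intro j
      have : v j ∈ LinearMap.ker π := hv ▸ Submodule.subset_span (Set.mem_range_self j)
      exact this
    calc ∑ i, a i ⊗ₜ[R] s i = ∑ i, (∑ j, v j i • b j) ⊗ₜ[R] s i := by
          exact Finset.sum_congr rfl fun i _ => by rw [hab i]
      _ = ∑ i, ∑ j, (v j i • b j) ⊗ₜ[R] s i := by
          exact Finset.sum_congr rfl fun i _ => TensorProduct.sum_tmul _ _ _
      _ = ∑ j, ∑ i, b j ⊗ₜ[R] (v j i • s i) := by
          rw [Finset.sum_comm]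
          exact Finset.sum_congr rfl fun j _ => Finset.sum_congr rfl fun i _ =>
            TensorProduct.smul_tmul _ _ _
      _ = ∑ j, b j ⊗ₜ[R] π (v j) := by
          exact Finset.sum_congr rfl fun j _ => by
            rw [← TensorProduct.tmul_sum, hπ]
      _ = 0 := by simp [hvker]
  · -- surjectivity
    intro f
    have hσ : ∀ m : M, ∃ σ : Fin n → R, (m = 0 → σ = 0) ∧ ∑ i, σ i • s i = m := by
      intro m
      by_cases hm : m = 0
      · exact ⟨0, fun _ => rfl, by simp [hm]⟩
      · obtain ⟨σ, hσ⟩ := (Submodule.mem_span_range_iff_exists_fun R).1 (hmem m)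
        exact ⟨σ, fun hz => absurd hz hm, hσ⟩
    choose σ hσ1 hσ2 using hσ
    have hsupp : ∀ i : Fin n, (Function.support fun k => σ (f.coeff k) i).IsPWO := by
      intro i
      refine f.isPWO_support.mono ?_
      intro k hk
      simp only [Function.mem_support] at hk ⊢
      intro hz
      exact hk (by simp [hσ1 _ hz])
    refine ⟨∑ i, (⟨fun k => σ (f.coeff k) i, hsupp i⟩ : LaurentSeries R) ⊗ₜ[R] s i, ?_⟩
    ext k
    rw [map_sum, coeff_sum_aux]
    calc ∑ i, (h (_ ⊗ₜ[R] s i)).coeff k = ∑ i, σ (f.coeff k) i • s i := by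
          exact Finset.sum_congr rfl fun i _ => hh _ _ _
      _ = f.coeff k := hσ2 _
end
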